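/- Let 1 < p < 3 and Λ > 0. Define F(x) = (1/(8π))·Υ(x)/(1-x) and G(x) = (1/(8π))·(1/(1-x))·[Υ(x) + 2((p-1)/(5-p))·x·Υ'(x)] for x ∈ (0,1). Then (F, G) solves the linear ODE system: F'(x) = (1/(1-x) - (5-p)/(2(p-1)x))F(x) + ((5-p)/(2(p-1)x))G(x), and G'(x) = -((3-p)/(2(p-1)x))F(x) + (1/(2(1-x)) + (3-p)/(2(p-1)x))G(x). -/

import Mathlib

open Real Filter Topology

/-- Pochhammer symbol `(a)_k`. -/
noncomputable def poch (a : ℝ) (k : ℕ) : ℝ := ∏ i ∈ Finset.range k, (a + i)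

/-- The Gauss hypergeometric series `₂F₁(a,b,c;x)`. -/
noncomputable def hyp (a b c x : ℝ) : ℝ :=
  ∑' k : ℕ, poch a k * poch b k / poch c k * x ^ k / (Nat.factorial k : ℝ)

noncomputable def ap (p : ℝ) : ℝ :=
  (3 - p + Real.sqrt (4 + 12 * (p - 1) - 3 * (p - 1) ^ 2)) / (4 * (p - 1))

noncomputable def bp (p : ℝ) : ℝ :=
  (3 - p - Real.sqrt (4 + 12 * (p - 1) - 3 * (p - 1) ^ 2)) / (4 * (p - 1))

noncomputable def cp (p : ℝ) : ℝ := p / (p - 1)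

/-- `Υ(x) = ₂F₁(a_p, b_p, c_p; x)`. -/
noncomputable def Ups (p x : ℝ) : ℝ := hyp (ap p) (bp p) (cp p) x

noncomputable def Ffun (p x : ℝ) : ℝ := 1 / (8 * π) * (Ups p x / (1 - x))

noncomputable def Gfun (p x : ℝ) : ℝ :=
  1 / (8 * π) * (1 / (1 - x)) *
    (Ups p x + 2 * ((p - 1) / (5 - p)) * x * deriv (Ups p) x)

/-! ### Auxiliary lemmas -/

lemma summable_aux (d f : ℕ → ℝ) (hrec : ∀ k, |d (k+1)| = f k * |d k|)
    (hf : Tendsto f atTop (𝓝 1)) {ρ : ℝ} (h0 : 0 < ρ) (h1 : ρ < 1) :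
    Summable fun k => |d k| * ρ ^ k := by
  set l : ℝ := (1 + ρ) / 2 with hl
  have hl1 : l < 1 := by rw [hl]; linarith
  have hρl : ρ < l := by rw [hl]; linarith
  have hq : (1:ℝ) < l / ρ := (one_lt_div h0).2 hρl
  have hev : ∀ᶠ k in atTop, f k ≤ l / ρ := hf.eventually_le_const hq
  apply summable_of_ratio_norm_eventually_le hl1
  filter_upwards [hev] with k hk
  have hd : |d (k+1)| ≤ (l / ρ) * |d k| := by
    rw [hrec k]
    exact mul_le_mul_of_nonneg_right hk (abs_nonneg _)
  have h2 : |d (k+1)| * ρ ^ (k+1) ≤ l * (|d k| * ρ ^ k) := by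
    calc |d (k+1)| * ρ ^ (k+1) ≤ (l / ρ) * |d k| * ρ ^ (k+1) := by
          exact mul_le_mul_of_nonneg_right hd (le_of_lt (pow_pos h0 (k+1)))
      _ = l * (|d k| * ρ ^ k) := by
          field_simp [pow_succ]; ring
  calc ‖|d (k+1)| * ρ ^ (k+1)‖ = |d (k+1)| * ρ ^ (k+1) := by
        rw [Real.norm_eq_abs, abs_mul, abs_abs, abs_of_nonneg (pow_nonneg h0.le _)]
    _ ≤ l * (|d k| * ρ ^ k) := h2
    _ = l * ‖|d k| * ρ ^ k‖ := by
        rw [Real.norm_eq_abs, abs_mul, abs_abs, abs_of_nonneg (pow_nonneg h0.le _)]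

lemma hasDerivAt_tsum_pow (d : ℕ → ℝ)
    (hs1 : ∀ ρ : ℝ, 0 < ρ → ρ < 1 → Summable fun k : ℕ => |((k:ℝ)+1) * d (k+1)| * ρ ^ k)
    {x : ℝ} (hx : |x| < 1) :
    HasDerivAt (fun y => ∑' k, d k * y ^ k) (∑' k : ℕ, ((k:ℝ)+1) * d (k+1) * x ^ k) x := by
  set ρ : ℝ := (|x| + 1) / 2 with hρ
  have h0 : 0 < ρ := by positivity
  have h1 : ρ < 1 := by rw [hρ]; linarith
  have hxρ : |x| < ρ := by rw [hρ]; linarith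
  set u : ℕ → ℝ := fun n => (n : ℝ) * |d n| * ρ ^ (n - 1) with hu
  have hus : Summable u := by
    rw [← summable_nat_add_iff 1]
    refine ((hs1 ρ h0 h1).congr ?_)
    intro n
    simp only [hu]
    rw [abs_mul, abs_of_nonneg (by positivity : (0:ℝ) ≤ (n:ℝ)+1)]
    push_cast
    ring_nf
  have key : HasDerivAt (fun y => ∑' k, d k * y ^ k)
      (∑' n, d n * ((n : ℝ) * x ^ (n - 1))) x := by
    refine hasDerivAt_tsum_of_isPreconnected hus Metric.isOpen_ball
      (convex_ball (0:ℝ) ρ).isPreconnected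
      (fun n y _ => (hasDerivAt_pow n y).const_mul (d n)) ?_
      (Metric.mem_ball_self h0) ?_ ?_
    · intro n y hy
      rw [Metric.mem_ball, Real.dist_eq, sub_zero] at hy
      rw [Real.norm_eq_abs, abs_mul, abs_mul, abs_pow]
      rw [abs_of_nonneg (Nat.cast_nonneg n : (0:ℝ) ≤ (n:ℝ))]
      calc |d n| * ((n:ℝ) * |y| ^ (n-1)) ≤ |d n| * ((n:ℝ) * ρ ^ (n-1)) := by
            have := pow_le_pow_left₀ (abs_nonneg y) hy.le (n-1)
            gcongr
        _ = u n := by rw [hu]; ring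
    · apply summable_of_ne_finset_zero (s := {0})
      intro n hn
      simp only [Finset.mem_singleton] at hn
      simp [zero_pow hn]
    · rw [Metric.mem_ball, Real.dist_eq, sub_zero]; exact hxρ
  have hsum : Summable fun n => d n * ((n : ℝ) * x ^ (n - 1)) := by
    apply Summable.of_norm_bounded hus
    intro n
    rw [Real.norm_eq_abs, abs_mul, abs_mul, abs_pow,
      abs_of_nonneg (Nat.cast_nonneg n : (0:ℝ) ≤ (n:ℝ))]
    calc |d n| * ((n:ℝ) * |x| ^ (n-1)) ≤ |d n| * ((n:ℝ) * ρ ^ (n-1)) := by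
          have := pow_le_pow_left₀ (abs_nonneg x) hxρ.le (n-1)
          gcongr
      _ = u n := by rw [hu]; ring
  convert key using 1
  rw [hsum.tsum_eq_zero_add]
  simp only [Nat.cast_zero, zero_mul, mul_zero, zero_add]
  apply tsum_congr
  intro n
  push_cast
  ring

lemma poch_succ (a : ℝ) (k : ℕ) : poch a (k+1) = poch a k * (a + k) :=
  Finset.prod_range_succ _ _

lemma poch_pos {c : ℝ} (hc : 0 < c) (k : ℕ) : 0 < poch c k := by
  apply Finset.prod_pos
  intro i _
  positivity

noncomputable def co (a b c : ℝ) (k : ℕ) : ℝ :=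
  poch a k * poch b k / (poch c k * (Nat.factorial k : ℝ))

lemma co_rec (a b : ℝ) {c : ℝ} (hc : 0 < c) (k : ℕ) :
    ((k:ℝ)+1) * (c + k) * co a b c (k+1) = (a + k) * (b + k) * co a b c k := by
  have h1 : poch c k ≠ 0 := (poch_pos hc k).ne'
  have h2 : (c : ℝ) + k ≠ 0 := by positivity
  have h3 : (Nat.factorial k : ℝ) ≠ 0 := Nat.cast_ne_zero.2 (Nat.factorial_ne_zero k)
  unfold co
  rw [poch_succ, poch_succ, poch_succ, Nat.factorial_succ]
  push_cast
  field_simp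

lemma co_abs_rec (a b : ℝ) {c : ℝ} (hc : 0 < c) (k : ℕ) :
    |co a b c (k+1)| = (|(a + k) * (b + k)| / (((k:ℝ)+1) * (c + k))) * |co a b c k| := by
  have h2 : (0:ℝ) < ((k:ℝ)+1) * (c + k) := by positivity
  have hrec := co_rec a b hc k
  have hco : co a b c (k+1) = (a + k) * (b + k) * co a b c k / (((k:ℝ)+1) * (c + k)) := by
    field_simp
    linarith [hrec]
  rw [hco, abs_div, abs_mul, abs_of_pos h2]
  ring

lemma tendsto_shift (e : ℝ) : Tendsto (fun k : ℕ => (e + k) / ((k:ℝ) + 1)) atTop (𝓝 1) := by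
  have h : ∀ k : ℕ, (e + k) / ((k:ℝ) + 1) = (e - 1) / ((k:ℝ) + 1) + 1 := by
    intro k
    have : ((k:ℝ) + 1) ≠ 0 := by positivity
    field_simp
    ring
  simp_rw [h]
  have h2 : Tendsto (fun k : ℕ => (e - 1) / ((k:ℝ) + 1)) atTop (𝓝 0) := by
    apply Tendsto.div_atTop tendsto_const_nhds
    exact tendsto_atTop_add_const_right _ 1 tendsto_natCast_atTop_atTop
  simpa using h2.add tendsto_const_nhds

lemma tendsto_shift2 (e : ℝ) {c : ℝ} (hc : 0 < c) :
    Tendsto (fun k : ℕ => (e + k) / (c + (k:ℝ))) atTop (𝓝 1) := by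
  have h : ∀ k : ℕ, (e + k) / (c + (k:ℝ)) = (e - c) / (c + (k:ℝ)) + 1 := by
    intro k
    have : (c + (k:ℝ)) ≠ 0 := by positivity
    field_simp
    ring
  simp_rw [h]
  have h2 : Tendsto (fun k : ℕ => (e - c) / (c + (k:ℝ))) atTop (𝓝 0) := by
    apply Tendsto.div_atTop tendsto_const_nhds
    exact tendsto_atTop_add_const_left _ c tendsto_natCast_atTop_atTop
  simpa using h2.add tendsto_const_nhds

lemma tendsto_ratio (a b : ℝ) {c : ℝ} (hc : 0 < c) :
    Tendsto (fun k : ℕ => |(a + k) * (b + k)| / (((k:ℝ)+1) * (c + k))) atTop (𝓝 1) := by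
  have heq : ∀ k : ℕ, |(a + k) * (b + k)| / (((k:ℝ)+1) * (c + k))
      = |((a + k) / ((k:ℝ)+1)) * ((b + k) / (c + (k:ℝ)))| := by
    intro k
    simp only [abs_mul, abs_div]
    rw [abs_of_pos (by positivity : (0:ℝ) < (k:ℝ)+1),
        abs_of_pos (by positivity : (0:ℝ) < c + (k:ℝ))]
    rw [div_mul_div_comm]
  simp_rw [heq]
  have := ((tendsto_shift a).mul (tendsto_shift2 b hc)).abs
  simpa using this

lemma hrec_shift (d f : ℕ → ℝ) (hrec : ∀ k, |d (k+1)| = f k * |d k|) (k : ℕ) :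
    |(((k+1:ℕ):ℝ)+1) * d (k+1+1)| =
      ((((k:ℝ)+2)/((k:ℝ)+1)) * f (k+1)) * |((k:ℝ)+1) * d (k+1)| := by
  have h1 : (0:ℝ) < (k:ℝ)+1 := by positivity
  rw [abs_mul, abs_mul, hrec (k+1)]
  rw [abs_of_nonneg (by positivity : (0:ℝ) ≤ ((k+1:ℕ):ℝ)+1),
      abs_of_nonneg h1.le]
  push_cast
  field_simp
  ring

lemma tendsto_f_shift (f : ℕ → ℝ) (hf : Tendsto f atTop (𝓝 1)) :
    Tendsto (fun k : ℕ => (((k:ℝ)+2)/((k:ℝ)+1)) * f (k+1)) atTop (𝓝 1) := by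
  have h1 : Tendsto (fun k : ℕ => ((k:ℝ)+2)/((k:ℝ)+1)) atTop (𝓝 1) := by
    have := tendsto_shift 2
    simpa [add_comm] using this
  have h2 : Tendsto (fun k : ℕ => f (k+1)) atTop (𝓝 1) :=
    hf.comp (tendsto_add_atTop_nat 1)
  simpa using h1.mul h2

/-! ### Specialization to the hypergeometric coefficients -/

noncomputable def D0 (p : ℝ) (k : ℕ) : ℝ := co (ap p) (bp p) (cp p) k
noncomputable def D1 (p : ℝ) (k : ℕ) : ℝ := ((k:ℝ)+1) * D0 p (k+1)
noncomputable def D2 (p : ℝ) (k : ℕ) : ℝ := ((k:ℝ)+1) * D1 p (k+1)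

section
variable {p : ℝ} (hp1 : 1 < p)

lemma cp_pos (hp1 : 1 < p) : 0 < cp p := by
  unfold cp
  apply div_pos <;> linarith

noncomputable def f0 (p : ℝ) (k : ℕ) : ℝ :=
  |(ap p + k) * (bp p + k)| / (((k:ℝ)+1) * (cp p + k))
noncomputable def f1 (p : ℝ) (k : ℕ) : ℝ := (((k:ℝ)+2)/((k:ℝ)+1)) * f0 p (k+1)
noncomputable def f2 (p : ℝ) (k : ℕ) : ℝ := (((k:ℝ)+2)/((k:ℝ)+1)) * f1 p (k+1)

lemma D0_rec (hp1 : 1 < p) : ∀ k, |D0 p (k+1)| = f0 p k * |D0 p k| :=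
  fun k => co_abs_rec (ap p) (bp p) (cp_pos hp1) k

lemma f0_tendsto (hp1 : 1 < p) : Tendsto (f0 p) atTop (𝓝 1) :=
  tendsto_ratio (ap p) (bp p) (cp_pos hp1)

lemma D1_rec (hp1 : 1 < p) : ∀ k, |D1 p (k+1)| = f1 p k * |D1 p k| := by
  intro k
  have := hrec_shift (D0 p) (f0 p) (D0_rec hp1) k
  simpa [D1, f1] using this

lemma f1_tendsto (hp1 : 1 < p) : Tendsto (f1 p) atTop (𝓝 1) :=
  tendsto_f_shift _ (f0_tendsto hp1)

lemma D2_rec (hp1 : 1 < p) : ∀ k, |D2 p (k+1)| = f2 p k * |D2 p k| := by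
  intro k
  have := hrec_shift (D1 p) (f1 p) (D1_rec hp1) k
  simpa [D2, f2] using this

lemma f2_tendsto (hp1 : 1 < p) : Tendsto (f2 p) atTop (𝓝 1) :=
  tendsto_f_shift _ (f1_tendsto hp1)

lemma sum_D0 (hp1 : 1 < p) {ρ : ℝ} (h0 : 0 < ρ) (h1 : ρ < 1) :
    Summable fun k => |D0 p k| * ρ ^ k :=
  summable_aux _ _ (D0_rec hp1) (f0_tendsto hp1) h0 h1

lemma sum_D1 (hp1 : 1 < p) {ρ : ℝ} (h0 : 0 < ρ) (h1 : ρ < 1) :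
    Summable fun k => |D1 p k| * ρ ^ k :=
  summable_aux _ _ (D1_rec hp1) (f1_tendsto hp1) h0 h1

lemma sum_D2 (hp1 : 1 < p) {ρ : ℝ} (h0 : 0 < ρ) (h1 : ρ < 1) :
    Summable fun k => |D2 p k| * ρ ^ k :=
  summable_aux _ _ (D2_rec hp1) (f2_tendsto hp1) h0 h1

lemma ups_eq (p : ℝ) (hp1 : 1 < p) : Ups p = fun y => ∑' k : ℕ, D0 p k * y ^ k := by
  funext y
  unfold Ups hyp
  apply tsum_congr
  intro k
  unfold D0 co
  have h1 : poch (cp p) k ≠ 0 := (poch_pos (cp_pos hp1) k).ne'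
  have h3 : (Nat.factorial k : ℝ) ≠ 0 := Nat.cast_ne_zero.2 (Nat.factorial_ne_zero k)
  field_simp

lemma hasDerivAt_ups (hp1 : 1 < p) {x : ℝ} (hx : |x| < 1) :
    HasDerivAt (Ups p) (∑' k : ℕ, D1 p k * x ^ k) x := by
  rw [ups_eq p hp1]
  have := hasDerivAt_tsum_pow (D0 p) (fun ρ h0 h1 => by
    refine (sum_D1 hp1 h0 h1).congr fun k => ?_
    simp [D1]) hx
  convert this using 1
  simp only [D1]

lemma hasDerivAt_D1sum (hp1 : 1 < p) {x : ℝ} (hx : |x| < 1) :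
    HasDerivAt (fun y => ∑' k : ℕ, D1 p k * y ^ k) (∑' k : ℕ, D2 p k * x ^ k) x := by
  have := hasDerivAt_tsum_pow (D1 p) (fun ρ h0 h1 => by
    refine (sum_D2 hp1 h0 h1).congr fun k => ?_
    simp [D2]) hx
  convert this using 1
  simp only [D2]

lemma hasDerivAt_deriv_ups (hp1 : 1 < p) {x : ℝ} (hx : |x| < 1) :
    HasDerivAt (deriv (Ups p)) (∑' k : ℕ, D2 p k * x ^ k) x := by
  apply (hasDerivAt_D1sum hp1 hx).congr_of_eventuallyEq
  have hball : Metric.ball (0:ℝ) 1 ∈ 𝓝 x := by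
    apply Metric.isOpen_ball.mem_nhds
    rwa [Metric.mem_ball, Real.dist_eq, sub_zero]
  filter_upwards [hball] with y hy
  rw [Metric.mem_ball, Real.dist_eq, sub_zero] at hy
  exact (hasDerivAt_ups hp1 hy).deriv

end

/-! ### The ODE satisfied by the sums -/

lemma ups_ode (p : ℝ) (hp1 : 1 < p) {x : ℝ} (hx0 : 0 < x) (hx1 : x < 1) :
    x * (1 - x) * (∑' k : ℕ, D2 p k * x ^ k)
      + (cp p - (ap p + bp p + 1) * x) * (∑' k : ℕ, D1 p k * x ^ k)
      - ap p * bp p * (∑' k : ℕ, D0 p k * x ^ k) = 0 := by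
  have habs : |x| < 1 := by rw [abs_of_pos hx0]; exact hx1
  have hsm : ∀ (d : ℕ → ℝ), (Summable fun k => |d k| * x ^ k) →
      Summable fun k : ℕ => d k * x ^ k := by
    intro d hd
    apply Summable.of_norm_bounded hd
    intro k
    rw [Real.norm_eq_abs, abs_mul, abs_pow, abs_of_pos hx0]
  have S0 : HasSum (fun k : ℕ => D0 p k * x ^ k) (∑' k : ℕ, D0 p k * x ^ k) :=
    (hsm _ (sum_D0 hp1 hx0 hx1)).hasSum
  have S1 : HasSum (fun k : ℕ => D1 p k * x ^ k) (∑' k : ℕ, D1 p k * x ^ k) :=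
    (hsm _ (sum_D1 hp1 hx0 hx1)).hasSum
  have S2 : HasSum (fun k : ℕ => D2 p k * x ^ k) (∑' k : ℕ, D2 p k * x ^ k) :=
    (hsm _ (sum_D2 hp1 hx0 hx1)).hasSum
  set t0 := ∑' k : ℕ, D0 p k * x ^ k
  set t1 := ∑' k : ℕ, D1 p k * x ^ k
  set t2 := ∑' k : ℕ, D2 p k * x ^ k
  -- v k = k * (k+1) * D0 (k+1) * x^k,  HasSum v (x * t2)
  set v : ℕ → ℝ := fun k => (k:ℝ) * D1 p k * x ^ k with hv
  have Sv : HasSum v (x * t2) := by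
    have h := (S2.mul_left x)
    have heq : ∀ k : ℕ, x * (D2 p k * x ^ k) = v (k+1) := by
      intro k
      simp only [hv, D2]
      push_cast
      ring
    rw [show (fun k : ℕ => x * (D2 p k * x ^ k)) = fun k => v (k+1) from funext heq] at h
    have := (hasSum_nat_add_iff (f := v) 1).mp h
    simpa [hv] using this
  -- w k = k * D0 k * x^k, HasSum w (x * t1)
  set w : ℕ → ℝ := fun k => (k:ℝ) * D0 p k * x ^ k with hw
  have Sw : HasSum w (x * t1) := by
    have h := (S1.mul_left x)
    have heq : ∀ k : ℕ, x * (D1 p k * x ^ k) = w (k+1) := by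
      intro k
      simp only [hw, D1]
      push_cast
      ring
    rw [show (fun k : ℕ => x * (D1 p k * x ^ k)) = fun k => w (k+1) from funext heq] at h
    have := (hasSum_nat_add_iff (f := w) 1).mp h
    simpa [hw] using this
  -- z k = k * (k-1) * D0 k * x^k, HasSum z (x^2 * t2)
  set z : ℕ → ℝ := fun k => (k:ℝ) * ((k:ℝ) - 1) * D0 p k * x ^ k with hz
  have Sz : HasSum z (x ^ 2 * t2) := by
    have h := (Sv.mul_left x)
    have heq : ∀ k : ℕ, x * v k = z (k+1) := by
      intro k
      simp only [hv, hz, D1]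
      push_cast
      ring
    rw [show (fun k : ℕ => x * v k) = fun k => z (k+1) from funext heq] at h
    have h2 := (hasSum_nat_add_iff (f := z) 1).mp h
    have h3 : (x * (x * t2) + ∑ i ∈ Finset.range 1, z i) = x ^ 2 * t2 := by
      simp [hz]
      ring
    rwa [h3] at h2
  have SP : HasSum (fun k : ℕ => (((k:ℝ)+1) * (cp p + k) * D0 p (k+1)) * x ^ k)
      (x * t2 + cp p * t1) := by
    have h := Sv.add (S1.mul_left (cp p))
    have heq : (fun k : ℕ => v k + cp p * (D1 p k * x ^ k))
        = fun k : ℕ => (((k:ℝ)+1) * (cp p + k) * D0 p (k+1)) * x ^ k := by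
      funext k
      simp only [hv, D1]
      ring
    rwa [heq] at h
  have SQ : HasSum (fun k : ℕ => (((k:ℝ)+ap p) * ((k:ℝ)+bp p) * D0 p k) * x ^ k)
      (x ^ 2 * t2 + (ap p + bp p + 1) * (x * t1) + ap p * bp p * t0) := by
    have h := (Sz.add (Sw.mul_left (ap p + bp p + 1))).add (S0.mul_left (ap p * bp p))
    have heq : (fun k : ℕ => z k + (ap p + bp p + 1) * w k
          + ap p * bp p * (D0 p k * x ^ k))
        = fun k : ℕ => (((k:ℝ)+ap p) * ((k:ℝ)+bp p) * D0 p k) * x ^ k := by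
      funext k
      simp only [hz, hw]
      ring
    rwa [heq] at h
  have hPQ : (fun k : ℕ => (((k:ℝ)+1) * (cp p + k) * D0 p (k+1)) * x ^ k)
      = fun k : ℕ => (((k:ℝ)+ap p) * ((k:ℝ)+bp p) * D0 p k) * x ^ k := by
    funext k
    have hrec := co_rec (ap p) (bp p) (cp_pos hp1) k
    have hD : ((k:ℝ)+1) * (cp p + k) * D0 p (k+1) = (ap p + k) * (bp p + k) * D0 p k := hrec
    linear_combination x ^ k * hD
  rw [hPQ] at SP
  have huniq := SP.unique SQ
  linear_combination huniq

set_option maxHeartbeats 1000000 in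
/-- `(F, G)` solves the linear ODE system on `(0,1)`. -/
theorem stmt_11 (p : ℝ) (hp1 : 1 < p) (hp3 : p < 3) :
    ∀ x ∈ Set.Ioo (0 : ℝ) 1,
      deriv (Ffun p) x
          = (1 / (1 - x) - (5 - p) / (2 * (p - 1) * x)) * Ffun p x
              + (5 - p) / (2 * (p - 1) * x) * Gfun p x ∧
      deriv (Gfun p) x
          = -((3 - p) / (2 * (p - 1) * x)) * Ffun p x
              + (1 / (2 * (1 - x)) + (3 - p) / (2 * (p - 1) * x)) * Gfun p x := by
  rintro x ⟨hx0, hx1⟩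
  have habs : |x| < 1 := by rw [abs_of_pos hx0]; exact hx1
  have h1x : (1:ℝ) - x ≠ 0 := by intro h; linarith [(sub_eq_zero.mp h)]
  have hp5 : (5:ℝ) - p ≠ 0 := by intro h; nlinarith
  have hpm : p - 1 ≠ 0 := by intro h; nlinarith
  have hxne : x ≠ 0 := ne_of_gt hx0
  have hπ : (π : ℝ) ≠ 0 := Real.pi_ne_zero
  set t0 := ∑' k : ℕ, D0 p k * x ^ k with ht0
  set t1 := ∑' k : ℕ, D1 p k * x ^ k with ht1
  set t2 := ∑' k : ℕ, D2 p k * x ^ k with ht2def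
  have hU : HasDerivAt (Ups p) t1 x := hasDerivAt_ups hp1 habs
  have hU2 : HasDerivAt (deriv (Ups p)) t2 x := hasDerivAt_deriv_ups hp1 habs
  have e0 : Ups p x = t0 := congrFun (ups_eq p hp1) x
  have e1 : deriv (Ups p) x = t1 := hU.deriv
  have hODE : x * (1 - x) * t2 + (cp p - (ap p + bp p + 1) * x) * t1
      - ap p * bp p * t0 = 0 := ups_ode p hp1 hx0 hx1
  -- facts about a_p, b_p, c_p
  have hs : (0:ℝ) ≤ 4 + 12 * (p - 1) - 3 * (p - 1) ^ 2 := by nlinarith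
  have hsq : Real.sqrt (4 + 12 * (p - 1) - 3 * (p - 1) ^ 2) ^ 2
      = 4 + 12 * (p - 1) - 3 * (p - 1) ^ 2 := Real.sq_sqrt hs
  have habsum : ap p + bp p = (3 - p) / (2 * (p - 1)) := by
    unfold ap bp
    field_simp
    ring
  have habprod : ap p * bp p = -((5 - p) / (4 * (p - 1))) := by
    unfold ap bp
    field_simp
    linear_combination (-1) * hsq
  have hcval : cp p = p / (p - 1) := rfl
  rw [habsum, habprod, hcval] at hODE
  -- express t2 via the ODE
  have ht2 : t2 = (-((5 - p) / (4 * (p - 1))) * t0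
      - (p / (p - 1) - ((3 - p) / (2 * (p - 1)) + 1) * x) * t1) / (x * (1 - x)) := by
    rw [eq_div_iff (by exact mul_ne_zero hxne h1x)]
    linarith [hODE]
  -- derivative of F
  have hden : HasDerivAt (fun y : ℝ => 1 - y) (-1) x := by
    simpa using (hasDerivAt_id x).const_sub 1
  have hFd : HasDerivAt (Ffun p)
      (1 / (8 * π) * ((t1 * (1 - x) - Ups p x * (-1)) / (1 - x) ^ 2)) x :=
    (hU.div hden h1x).const_mul (1 / (8 * π))
  -- derivative of G
  have hmul : HasDerivAt (fun y => y * deriv (Ups p) y)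
      (1 * deriv (Ups p) x + x * t2) x := (hasDerivAt_id x).mul hU2
  have hconst : HasDerivAt (fun y => 2 * ((p - 1) / (5 - p)) * (y * deriv (Ups p) y))
      (2 * ((p - 1) / (5 - p)) * (1 * deriv (Ups p) x + x * t2)) x :=
    hmul.const_mul _
  have hinner : HasDerivAt
      (fun y => Ups p y + 2 * ((p - 1) / (5 - p)) * y * deriv (Ups p) y)
      (t1 + 2 * ((p - 1) / (5 - p)) * (1 * deriv (Ups p) x + x * t2)) x := by
    have h := hU.add hconst
    have heq : (fun y => Ups p y + 2 * ((p - 1) / (5 - p)) * (y * deriv (Ups p) y))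
        = fun y => Ups p y + 2 * ((p - 1) / (5 - p)) * y * deriv (Ups p) y := by
      funext y
      ring
    rw [← heq]; exact h
  have hCinv : HasDerivAt (fun y : ℝ => 1 / (8 * π) * (1 / (1 - y)))
      (1 / (8 * π) * ((0 * (1 - x) - 1 * (-1)) / (1 - x) ^ 2)) x :=
    (((hasDerivAt_const x (1:ℝ)).div hden h1x)).const_mul (1 / (8 * π))
  have hGd : HasDerivAt (Gfun p)
      (1 / (8 * π) * ((0 * (1 - x) - 1 * (-1)) / (1 - x) ^ 2)
          * (Ups p x + 2 * ((p - 1) / (5 - p)) * x * deriv (Ups p) x)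
        + 1 / (8 * π) * (1 / (1 - x))
          * (t1 + 2 * ((p - 1) / (5 - p)) * (1 * deriv (Ups p) x + x * t2))) x :=
    hCinv.mul hinner
  clear_value t0 t1 t2
  refine ⟨?_, ?_⟩
  · rw [hFd.deriv]
    simp only [Ffun, Gfun, e0, e1]
    field_simp
    ring
  · rw [hGd.deriv]
    simp only [Ffun, Gfun, e0, e1]
    rw [ht2]
    field_simp
    ring
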